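/- For every n ∈ ℕ, the graph S^=(n) contains no subgraph isomorphic to C4^△; i.e., S^=(n) is C4^△-free. -/

import Mathlib

open SimpleGraph

/-- The number of triangles (copies of `K₃`) in a graph `G`, i.e. `N(K₃, G)`. -/
noncomputable def triangleCount {V : Type*} (G : SimpleGraph V) : ℕ :=
  Set.ncard {s : Finset V | G.IsNClique 3 s}

/-- `G` contains a subgraph isomorphic to `H`. -/
def Contains {W V : Type*} (H : SimpleGraph W) (G : SimpleGraph V) : Prop :=
  ∃ f : H →g G, Function.Injective f

/-- `G` is `H`-free: it contains no subgraph isomorphic to `H`. -/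
def Free {W V : Type*} (H : SimpleGraph W) (G : SimpleGraph V) : Prop :=
  ¬ Contains H G

/-- The expansion `F^△` of a graph `F`: each edge `uv` of `F` is replaced by a triangle
`u v w_{uv}` where the new vertices `w_{uv}` are pairwise distinct and outside `V(F)`. -/
def expansion {V : Type*} (F : SimpleGraph V) : SimpleGraph (V ⊕ F.edgeSet) :=
  SimpleGraph.fromRel (fun a b =>
    (∃ u v, a = Sum.inl u ∧ b = Sum.inl v ∧ F.Adj u v) ∨
    (∃ u, ∃ e : F.edgeSet, a = Sum.inl u ∧ b = Sum.inr e ∧ u ∈ (e : Sym2 V)))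

/-- `C₄^△`, the expansion of the 4-edge cycle: a graph on 8 vertices. -/
def C4expansion : SimpleGraph ((Fin 4) ⊕ (SimpleGraph.cycleGraph 4).edgeSet) :=
  expansion (SimpleGraph.cycleGraph 4)

/-- The generalized Turán number `ex(n, K₃, H)`: the maximum number of triangles in an
`H`-free graph on `n` vertices. -/
noncomputable def exTriangles (n : ℕ) {W : Type*} (H : SimpleGraph W) : ℕ :=
  sSup {k | ∃ G : SimpleGraph (Fin n), _root_.Free H G ∧ triangleCount G = k}

/-- `T(n)`: the complete bipartite graph on `Fin n` with parts
`X = {v : v < ⌊n/2⌋}` (of size `⌊n/2⌋`) and `Y = {v : v ≥ ⌊n/2⌋}` (of size `⌈n/2⌉`). -/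
def Tgraph (n : ℕ) : SimpleGraph (Fin n) :=
  SimpleGraph.fromRel (fun u v => u.val < n / 2 ∧ n / 2 ≤ v.val)

/-- `T⁺(n)`: the graph `T(n)` with one extra edge (between vertices `0` and `1`) added
inside the part `X`. -/
def TgraphPlus (n : ℕ) : SimpleGraph (Fin n) :=
  SimpleGraph.fromRel (fun u v =>
    (u.val < n / 2 ∧ n / 2 ≤ v.val) ∨ (u.val = 0 ∧ v.val = 1))

/-- `T⁼(n)`: the graph obtained from `T(n)` by adding the edge `e₁ = {0,1}` inside `X`,
adding the edge `e₂ = {⌊n/2⌋, ⌊n/2⌋+1}` inside `Y`, and deleting the perfect matching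
`{0,⌊n/2⌋}, {1,⌊n/2⌋+1}` between the endpoints of `e₁` and of `e₂`. -/
def TgraphEq (n : ℕ) : SimpleGraph (Fin n) :=
  SimpleGraph.fromRel (fun u v =>
    (u.val < n / 2 ∧ n / 2 ≤ v.val ∧
      ¬(u.val = 0 ∧ v.val = n / 2) ∧ ¬(u.val = 1 ∧ v.val = n / 2 + 1))
    ∨ (u.val = 0 ∧ v.val = 1) ∨ (u.val = n / 2 ∧ v.val = n / 2 + 1))

/-- The join `K₁ ⋈ H` of a single new vertex with the graph `H`. -/
def joinK1 {V : Type*} (H : SimpleGraph V) : SimpleGraph (Option V) :=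
  SimpleGraph.fromRel (fun u v =>
    u = none ∨ ∃ a b, u = some a ∧ v = some b ∧ H.Adj a b)

/-- `S(n) = K₁ ⋈ T(n-1)`. -/
def Sgraph (n : ℕ) : SimpleGraph (Option (Fin (n - 1))) := joinK1 (Tgraph (n - 1))

/-- `S⁺(n) = K₁ ⋈ T⁺(n-1)`. -/
def SgraphPlus (n : ℕ) : SimpleGraph (Option (Fin (n - 1))) := joinK1 (TgraphPlus (n - 1))

/-- `S⁼(n) = K₁ ⋈ T⁼(n-1)`. -/
def SgraphEq (n : ℕ) : SimpleGraph (Option (Fin (n - 1))) := joinK1 (TgraphEq (n - 1))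

/-- `d_G(uv)`: the number of triangles of `G` containing the edge `uv`, i.e. the number of
common neighbors of `u` and `v`. -/
noncomputable def edgeTriangleDeg {V : Type*} (G : SimpleGraph V) (u v : V) : ℕ :=
  {w : V | G.Adj u w ∧ G.Adj v w}.ncard

/-- `e_G(A, B)`: the number of edges of `G` with one endpoint in `A` and the other in `B`
(for disjoint `A`, `B`). -/
noncomputable def crossEdges {V : Type*} (G : SimpleGraph V) (A B : Set V) : ℕ :=
  {p : V × V | p.1 ∈ A ∧ p.2 ∈ B ∧ G.Adj p.1 p.2}.ncard


/-! ### Auxiliary machinery for `stmt2` -/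

/-- Arithmetic version of the defining relation of `T⁼`. -/
def ERaux (h a b : ℕ) : Prop :=
  (a < h ∧ h ≤ b ∧ ¬(a = 0 ∧ b = h) ∧ ¬(a = 1 ∧ b = h + 1)) ∨ (a = 0 ∧ b = 1) ∨ (a = h ∧ b = h + 1)

/-- Arithmetic version of adjacency in `T⁼`. -/
def EEaux (h a b : ℕ) : Prop := a ≠ b ∧ (ERaux h a b ∨ ERaux h b a)

set_option maxHeartbeats 4000000 in
/-- Core combinatorial lemma: `T⁼` contains no path `b - c - d` whose two edges lie in
triangles with distinct apexes `w, w'` outside `{b, c, d}`. -/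
lemma coreAux {h B C D W W' : ℕ} (hbd : B ≠ D) (hww : W ≠ W') (hwd : W ≠ D) (hw'b : W' ≠ B)
    (h1 : EEaux h C B) (h2 : EEaux h C D) (h3 : EEaux h W B) (h4 : EEaux h W C)
    (h5 : EEaux h W' C) (h6 : EEaux h W' D) : False := by
  unfold EEaux ERaux at h1 h2 h3 h4 h5 h6
  obtain ⟨n1, h1⟩ := h1; obtain ⟨n2, h2⟩ := h2; obtain ⟨n3, h3⟩ := h3
  obtain ⟨n4, h4⟩ := h4; obtain ⟨n5, h5⟩ := h5; obtain ⟨n6, h6⟩ := h6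
  rcases h4 with ((h4|h4|h4)|(h4|h4|h4)) <;>
    rcases h5 with ((h5|h5|h5)|(h5|h5|h5)) <;>
    first
    | (clear h1 h2 h3 h6; omega)
    | (rcases h1 with ((h1|h1|h1)|(h1|h1|h1)) <;>
        rcases h2 with ((h2|h2|h2)|(h2|h2|h2)) <;>
        first
        | (clear h3 h6; omega)
        | (rcases h3 with ((h3|h3|h3)|(h3|h3|h3)) <;>
            rcases h6 with ((h6|h6|h6)|(h6|h6|h6)) <;> omega))

lemma tEq_adj_aux {m : ℕ} {u v : Fin m} (h : (TgraphEq m).Adj u v) :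
    EEaux (m / 2) u.val v.val := by
  rw [TgraphEq, SimpleGraph.fromRel_adj] at h
  exact ⟨fun hc => h.1 (Fin.val_injective hc), h.2⟩

lemma joinK1_some_adj_aux {V : Type*} {H : SimpleGraph V} {a b : V}
    (h : (joinK1 H).Adj (some a) (some b)) : H.Adj a b := by
  rw [joinK1, SimpleGraph.fromRel_adj] at h
  obtain ⟨hne, h | h⟩ := h
  · obtain h | ⟨x, y, hx, hy, hadj⟩ := h
    · exact absurd h (by simp)
    · cases Option.some.inj hx; cases Option.some.inj hy; exact hadj
  · obtain h | ⟨x, y, hx, hy, hadj⟩ := h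
    · exact absurd h (by simp)
    · cases Option.some.inj hx; cases Option.some.inj hy; exact hadj.symm

lemma lemLopt {m : ℕ} {b c d w w' : Option (Fin m)}
    (hbd : b ≠ d) (hww : w ≠ w') (hwd : w ≠ d) (hw'b : w' ≠ b)
    (nb : b ≠ none) (nc : c ≠ none) (nd : d ≠ none) (nw : w ≠ none) (nw' : w' ≠ none)
    (h1 : (joinK1 (TgraphEq m)).Adj c b) (h2 : (joinK1 (TgraphEq m)).Adj c d)
    (h3 : (joinK1 (TgraphEq m)).Adj w b) (h4 : (joinK1 (TgraphEq m)).Adj w c)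
    (h5 : (joinK1 (TgraphEq m)).Adj w' c) (h6 : (joinK1 (TgraphEq m)).Adj w' d) : False := by
  obtain ⟨B, rfl⟩ := Option.ne_none_iff_exists'.1 nb
  obtain ⟨C, rfl⟩ := Option.ne_none_iff_exists'.1 nc
  obtain ⟨D, rfl⟩ := Option.ne_none_iff_exists'.1 nd
  obtain ⟨W, rfl⟩ := Option.ne_none_iff_exists'.1 nw
  obtain ⟨W2, rfl⟩ := Option.ne_none_iff_exists'.1 nw'
  exact coreAux (h := m / 2)
    (fun hc => hbd (congrArg some (Fin.val_injective hc)))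
    (fun hc => hww (congrArg some (Fin.val_injective hc)))
    (fun hc => hwd (congrArg some (Fin.val_injective hc)))
    (fun hc => hw'b (congrArg some (Fin.val_injective hc)))
    (tEq_adj_aux (joinK1_some_adj_aux h1)) (tEq_adj_aux (joinK1_some_adj_aux h2))
    (tEq_adj_aux (joinK1_some_adj_aux h3)) (tEq_adj_aux (joinK1_some_adj_aux h4))
    (tEq_adj_aux (joinK1_some_adj_aux h5)) (tEq_adj_aux (joinK1_some_adj_aux h6))

lemma c4_adj_inl {u v : Fin 4} (h : (SimpleGraph.cycleGraph 4).Adj u v) :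
    C4expansion.Adj (Sum.inl u) (Sum.inl v) := by
  unfold C4expansion expansion
  rw [SimpleGraph.fromRel_adj]
  exact ⟨fun hc => h.ne (Sum.inl.inj hc), Or.inl (Or.inl ⟨u, v, rfl, rfl, h⟩)⟩

lemma c4_adj_inr {u : Fin 4} {e : (SimpleGraph.cycleGraph 4).edgeSet}
    (h : u ∈ (e : Sym2 (Fin 4))) :
    C4expansion.Adj (Sum.inl u) (Sum.inr e) := by
  unfold C4expansion expansion
  rw [SimpleGraph.fromRel_adj]
  exact ⟨fun hc => Sum.inl_ne_inr hc, Or.inl (Or.inr ⟨u, e, rfl, rfl, h⟩)⟩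

def E01aux : (SimpleGraph.cycleGraph 4).edgeSet := ⟨s(0, 1), ((SimpleGraph.cycleGraph 4).mem_edgeSet).2 (by decide)⟩
def E12aux : (SimpleGraph.cycleGraph 4).edgeSet := ⟨s(1, 2), ((SimpleGraph.cycleGraph 4).mem_edgeSet).2 (by decide)⟩
def E23aux : (SimpleGraph.cycleGraph 4).edgeSet := ⟨s(2, 3), ((SimpleGraph.cycleGraph 4).mem_edgeSet).2 (by decide)⟩
def E30aux : (SimpleGraph.cycleGraph 4).edgeSet := ⟨s(3, 0), ((SimpleGraph.cycleGraph 4).mem_edgeSet).2 (by decide)⟩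

/-- For every `n`, the graph `S⁼(n)` is `C₄^△`-free. -/
theorem stmt2 (n : ℕ) : _root_.Free C4expansion (SgraphEq n) := by
  rintro ⟨f, hf⟩
  have nne : ∀ {x y : (Fin 4) ⊕ (SimpleGraph.cycleGraph 4).edgeSet},
      x ≠ y → f x = none → f y ≠ none :=
    fun hxy hx hy => hxy (hf (hx.trans hy.symm))
  have A01 : (joinK1 (TgraphEq (n - 1))).Adj (f (Sum.inl 0)) (f (Sum.inl 1)) :=
    f.map_adj (c4_adj_inl (by decide))
  have A12 : (joinK1 (TgraphEq (n - 1))).Adj (f (Sum.inl 1)) (f (Sum.inl 2)) :=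
    f.map_adj (c4_adj_inl (by decide))
  have A23 : (joinK1 (TgraphEq (n - 1))).Adj (f (Sum.inl 2)) (f (Sum.inl 3)) :=
    f.map_adj (c4_adj_inl (by decide))
  have A30 : (joinK1 (TgraphEq (n - 1))).Adj (f (Sum.inl 3)) (f (Sum.inl 0)) :=
    f.map_adj (c4_adj_inl (by decide))
  have B00 : (joinK1 (TgraphEq (n - 1))).Adj (f (Sum.inl 0)) (f (Sum.inr E01aux)) :=
    f.map_adj (c4_adj_inr (by decide))
  have B10 : (joinK1 (TgraphEq (n - 1))).Adj (f (Sum.inl 1)) (f (Sum.inr E01aux)) :=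
    f.map_adj (c4_adj_inr (by decide))
  have B11 : (joinK1 (TgraphEq (n - 1))).Adj (f (Sum.inl 1)) (f (Sum.inr E12aux)) :=
    f.map_adj (c4_adj_inr (by decide))
  have B21 : (joinK1 (TgraphEq (n - 1))).Adj (f (Sum.inl 2)) (f (Sum.inr E12aux)) :=
    f.map_adj (c4_adj_inr (by decide))
  have B22 : (joinK1 (TgraphEq (n - 1))).Adj (f (Sum.inl 2)) (f (Sum.inr E23aux)) :=
    f.map_adj (c4_adj_inr (by decide))
  have B32 : (joinK1 (TgraphEq (n - 1))).Adj (f (Sum.inl 3)) (f (Sum.inr E23aux)) :=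
    f.map_adj (c4_adj_inr (by decide))
  have B33 : (joinK1 (TgraphEq (n - 1))).Adj (f (Sum.inl 3)) (f (Sum.inr E30aux)) :=
    f.map_adj (c4_adj_inr (by decide))
  have B03 : (joinK1 (TgraphEq (n - 1))).Adj (f (Sum.inl 0)) (f (Sum.inr E30aux)) :=
    f.map_adj (c4_adj_inr (by decide))
  by_cases h0 : f (Sum.inl 0) = none
  · exact lemLopt (hf.ne (by decide)) (hf.ne (by decide)) (hf.ne (by decide)) (hf.ne (by decide))
      (nne (by decide) h0) (nne (by decide) h0) (nne (by decide) h0)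
      (nne (by decide) h0) (nne (by decide) h0)
      A12.symm A23 B11.symm B21.symm B22.symm B32.symm
  by_cases h1 : f (Sum.inl 1) = none
  · exact lemLopt (hf.ne (by decide)) (hf.ne (by decide)) (hf.ne (by decide)) (hf.ne (by decide))
      (nne (by decide) h1) (nne (by decide) h1) (nne (by decide) h1)
      (nne (by decide) h1) (nne (by decide) h1)
      A23.symm A30 B22.symm B32.symm B33.symm B03.symm
  by_cases h2 : f (Sum.inl 2) = none
  · exact lemLopt (hf.ne (by decide)) (hf.ne (by decide)) (hf.ne (by decide)) (hf.ne (by decide))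
      (nne (by decide) h2) (nne (by decide) h2) (nne (by decide) h2)
      (nne (by decide) h2) (nne (by decide) h2)
      A30.symm A01 B33.symm B03.symm B00.symm B10.symm
  by_cases h3 : f (Sum.inl 3) = none
  · exact lemLopt (hf.ne (by decide)) (hf.ne (by decide)) (hf.ne (by decide)) (hf.ne (by decide))
      (nne (by decide) h3) (nne (by decide) h3) (nne (by decide) h3)
      (nne (by decide) h3) (nne (by decide) h3)
      A01.symm A12 B00.symm B10.symm B11.symm B21.symm
  by_cases g0 : f (Sum.inr E01aux) = none
  · exact lemLopt (hf.ne (by decide)) (hf.ne (by decide)) (hf.ne (by decide)) (hf.ne (by decide))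
      h1 h2 h3 (nne (by decide) g0) (nne (by decide) g0)
      A12.symm A23 B11.symm B21.symm B22.symm B32.symm
  by_cases g1 : f (Sum.inr E12aux) = none
  · exact lemLopt (hf.ne (by decide)) (hf.ne (by decide)) (hf.ne (by decide)) (hf.ne (by decide))
      h2 h3 h0 (nne (by decide) g1) (nne (by decide) g1)
      A23.symm A30 B22.symm B32.symm B33.symm B03.symm
  by_cases g2 : f (Sum.inr E23aux) = none
  · exact lemLopt (hf.ne (by decide)) (hf.ne (by decide)) (hf.ne (by decide)) (hf.ne (by decide))
      h3 h0 h1 (nne (by decide) g2) (nne (by decide) g2)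
      A30.symm A01 B33.symm B03.symm B00.symm B10.symm
  · exact lemLopt (hf.ne (by decide)) (hf.ne (by decide)) (hf.ne (by decide)) (hf.ne (by decide))
      h0 h1 h2 g0 g1
      A01.symm A12 B00.symm B10.symm B11.symm B21.symm
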